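/- Suppose the real sequences (u_t) nonnegative, constants C ≥ 0, and nonnegative weights (w_k) satisfy (1/4)γ u_t² ≤ C + ∑_{k=0}^{t−1} w_k u_{k+1} for all t ≥ 1, where γ > 0 and u_{k+1} appears with the same bound for all k ≤ t−1. Then u_t ≤ (2/γ)∑_{k=0}^{t−1} w_k + √((4C/γ) + ((2/γ)∑_{k=0}^{t−1} w_k)²) for all t ≥ 1. -/

import Mathlib

open Finset

/-- Discrete Gronwall-type inequality: if `(1/4)γ u_t² ≤ C + ∑_{k<t} w_k u_{k+1}`
for all `t ≥ 1`, then `u_t ≤ (2/γ)∑_{k<t} w_k + √(4C/γ + ((2/γ)∑_{k<t} w_k)²)`. -/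
theorem stmt_12 (u w : ℕ → ℝ) (C γ : ℝ)
    (hu : ∀ k, 0 ≤ u k) (hw : ∀ k, 0 ≤ w k) (hC : 0 ≤ C) (hγ : 0 < γ)
    (hrec : ∀ t, 1 ≤ t →
      (1 / 4) * γ * (u t) ^ 2 ≤ C + ∑ k ∈ range t, w k * u (k + 1)) :
    ∀ t, 1 ≤ t →
      u t ≤ (2 / γ) * ∑ k ∈ range t, w k
        + Real.sqrt (4 * C / γ + ((2 / γ) * ∑ k ∈ range t, w k) ^ 2) := by
  intro t ht
  set W := ∑ k ∈ range t, w k with hWdef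
  have hW0 : 0 ≤ W := Finset.sum_nonneg fun k _ => hw k
  set S := (2 / γ) * W with hSdef
  have hS0 : 0 ≤ S := by positivity
  obtain ⟨s0, hs0, hmax⟩ := Finset.exists_max_image (range t) (fun s => u (s + 1))
    (Finset.nonempty_range_iff.mpr (by omega))
  set M := u (s0 + 1) with hMdef
  have hM0 : 0 ≤ M := hu _
  have hs0t : s0 + 1 ≤ t := by simpa [Nat.succ_le_iff] using Finset.mem_range.mp hs0
  have hut : u t ≤ M := by
    have := hmax (t - 1) (Finset.mem_range.mpr (by omega))
    simpa [Nat.sub_add_cancel ht] using this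
  have key : (1 / 4) * γ * M ^ 2 ≤ C + M * W := by
    calc (1 / 4) * γ * M ^ 2 ≤ C + ∑ k ∈ range (s0 + 1), w k * u (k + 1) :=
          hrec _ (by omega)
      _ ≤ C + ∑ k ∈ range t, w k * u (k + 1) :=
          add_le_add_right (Finset.sum_le_sum_of_subset_of_nonneg
            (Finset.range_subset_range.mpr hs0t)
            (fun k _ _ => mul_nonneg (hw k) (hu _))) C
      _ ≤ C + ∑ k ∈ range t, w k * M := by
          gcongr C + ∑ k ∈ range t, ?_ with k hk
          exact mul_le_mul_of_nonneg_left (hmax k hk) (hw k)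
      _ = C + M * W := by rw [← Finset.sum_mul]; ring
  have hM2 : M ^ 2 ≤ 4 * C / γ + 2 * S * M := by
    have h1 : M ^ 2 ≤ (4 * C + 4 * (M * W)) / γ := by
      rw [le_div_iff₀ hγ]; nlinarith
    have h2 : 4 * C / γ + 2 * S * M = (4 * C + 4 * (M * W)) / γ := by
      rw [hSdef]; field_simp; ring
    linarith
  have hsq : (M - S) ^ 2 ≤ 4 * C / γ + S ^ 2 := by nlinarith
  have hfin : M - S ≤ Real.sqrt (4 * C / γ + S ^ 2) := by
    calc M - S ≤ |M - S| := le_abs_self _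
      _ = Real.sqrt ((M - S) ^ 2) := (Real.sqrt_sq_eq_abs _).symm
      _ ≤ Real.sqrt (4 * C / γ + S ^ 2) := Real.sqrt_le_sqrt hsq
  linarith
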